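/- Let s ∈ (0,1) and α ∈ (0, s). Then P.V. ∫_ℝ (1 − |t|^α)/|1 − t|^{2+s} dt > 0, where the principal value is taken by excising the interval (1−ε, 1+ε) and letting ε → 0⁺. -/

import Mathlib

open MeasureTheory Filter Set Real Topology

namespace PV

noncomputable def f (s α t : ℝ) : ℝ := (1 - |t| ^ α) / |1 - t| ^ (2 + s)
noncomputable def g (s α u : ℝ) : ℝ := (|u| ^ s - |u| ^ (s - α)) / |1 - u| ^ (2 + s)
noncomputable def F (s α t : ℝ) : ℝ :=
  (1 - |t| ^ α) * (1 - |t| ^ (s - α)) / |1 - t| ^ (2 + s)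

lemma cont_abs_rpow (p : ℝ) (hp : 0 ≤ p) : Continuous fun t : ℝ => |t| ^ p :=
  continuous_iff_continuousAt.2 fun _ =>
    (Real.continuousAt_rpow_const _ _ (Or.inr hp)).comp continuous_abs.continuousAt

lemma cont_den (s : ℝ) (hs0 : 0 < s) : Continuous fun t : ℝ => |1 - t| ^ (2 + s) :=
  ((cont_abs_rpow (2 + s) (by linarith)).comp (continuous_const.sub continuous_id))

lemma den_pos {s t : ℝ} (ht : t ≠ 1) : 0 < |1 - t| ^ (2 + s) :=
  Real.rpow_pos_of_pos (abs_pos.2 (sub_ne_zero.2 (fun h => ht (by linarith [h.symm] : t = 1)))) _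

lemma meas_f {s α : ℝ} (hs0 : 0 < s) (ha0 : 0 < α) : Measurable (f s α) :=
  ((continuous_const.sub (cont_abs_rpow α ha0.le)).measurable).div
    (cont_den s hs0).measurable

lemma meas_g {s α : ℝ} (hs0 : 0 < s) (has : α < s) : Measurable (g s α) :=
  (((cont_abs_rpow s hs0.le).sub (cont_abs_rpow (s - α) (by linarith))).measurable).div
    (cont_den s hs0).measurable

lemma meas_F {s α : ℝ} (hs0 : 0 < s) (ha0 : 0 < α) (has : α < s) : Measurable (F s α) :=
  (((continuous_const.sub (cont_abs_rpow α ha0.le)).mul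
    (continuous_const.sub (cont_abs_rpow (s - α) (by linarith)))).measurable).div
    (cont_den s hs0).measurable

lemma contOn_f {s α : ℝ} (hs0 : 0 < s) (ha0 : 0 < α) {S : Set ℝ} (hS : (1:ℝ) ∉ S) :
    ContinuousOn (f s α) S :=
  ((continuous_const.sub (cont_abs_rpow α ha0.le)).continuousOn).div
    (cont_den s hs0).continuousOn
    (fun _ hx => (den_pos (fun h => hS (h ▸ hx))).ne')

lemma contOn_F {s α : ℝ} (hs0 : 0 < s) (ha0 : 0 < α) (has : α < s) {S : Set ℝ}
    (hS : (1:ℝ) ∉ S) : ContinuousOn (F s α) S :=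
  (((continuous_const.sub (cont_abs_rpow α ha0.le)).mul
    (continuous_const.sub (cont_abs_rpow (s - α) (by linarith)))).continuousOn).div
    (cont_den s hs0).continuousOn
    (fun _ hx => (den_pos (fun h => hS (h ▸ hx))).ne')

lemma key_identity {s α : ℝ} (u : ℝ) (hu0 : u ≠ 0) (hu1 : u ≠ 1) :
    |(-(u ^ 2)⁻¹)| • f s α u⁻¹ = g s α u := by
  have hx : 0 < |u| := abs_pos.2 hu0
  have h1u : (1:ℝ) - u ≠ 0 := sub_ne_zero.2 (fun h => hu1 h.symm)
  have hD : 0 < |1 - u| ^ (2 + s) := Real.rpow_pos_of_pos (abs_pos.2 h1u) _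
  have habs : |1 - u⁻¹| = |1 - u| / |u| := by
    have h : 1 - u⁻¹ = (u - 1) / u := by field_simp
    rw [h, abs_div, abs_sub_comm]
  have habs2 : |u⁻¹| = |u|⁻¹ := abs_inv u
  have e0 : |(-(u ^ 2)⁻¹)| = (|u| ^ (2:ℕ))⁻¹ := by
    rw [abs_neg, abs_inv, ← sq_abs, abs_pow, abs_abs]
  rw [smul_eq_mul, f, g, e0, habs, habs2]
  have e1 : (|1 - u| / |u|) ^ (2 + s) = |1 - u| ^ (2 + s) / |u| ^ (2 + s) :=
    Real.div_rpow (abs_nonneg _) (abs_nonneg _) (2 + s)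
  rw [e1, Real.inv_rpow (abs_nonneg u)]
  have e2 : |u| ^ (2 + s) = |u| ^ (2:ℕ) * |u| ^ s := by
    rw [← Real.rpow_natCast |u| 2, ← Real.rpow_add hx]
    norm_num
  have e3 : |u| ^ s = |u| ^ α * |u| ^ (s - α) := by
    rw [← Real.rpow_add hx]; ring_nf
  have hne1 : |u| ^ α ≠ 0 := (Real.rpow_pos_of_pos hx α).ne'
  have hne2 : |u| ^ s ≠ 0 := (Real.rpow_pos_of_pos hx s).ne'
  have hne3 : (|u| ^ (2:ℕ)) ≠ 0 := pow_ne_zero _ hx.ne'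
  field_simp [e2]
  rw [e2, e3]; ring

lemma image_inv_pos {c : ℝ} (hc : 0 < c) :
    (fun u : ℝ => u⁻¹) '' Ioo 0 c = Ioi c⁻¹ := by
  ext x
  simp only [mem_image, mem_Ioo, mem_Ioi]
  constructor
  · rintro ⟨u, ⟨hu0, huc⟩, rfl⟩
    exact inv_strictAnti₀ hu0 huc
  · intro hx
    have hcinv : 0 < c⁻¹ := inv_pos.2 hc
    have hx0 : 0 < x := hcinv.trans hx
    refine ⟨x⁻¹, ⟨inv_pos.2 hx0, ?_⟩, inv_inv x⟩
    have := inv_strictAnti₀ hcinv hx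
    rwa [inv_inv] at this

lemma image_inv_neg :
    (fun u : ℝ => u⁻¹) '' Ioo (-1 : ℝ) 0 = Iio (-1 : ℝ) := by
  ext x
  simp only [mem_image, mem_Ioo, mem_Iio]
  constructor
  · rintro ⟨u, ⟨hu1, hu0⟩, rfl⟩
    have h1 : (1:ℝ) < (-u)⁻¹ := (one_lt_inv₀ (by linarith)).2 (by linarith)
    rw [inv_neg] at h1; linarith
  · intro hx
    have hx0 : x < 0 := by linarith
    refine ⟨x⁻¹, ⟨?_, inv_neg''.2 hx0⟩, inv_inv x⟩
    have h1 : (-x)⁻¹ < 1 := inv_lt_one_of_one_lt₀ (by linarith)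
    rw [inv_neg] at h1; linarith

lemma cov_pos {s α : ℝ} {c : ℝ} (hc : 0 < c) (hc1 : c < 1) :
    (∫ x in Ioi c⁻¹, f s α x) = ∫ u in Ioo 0 c, g s α u := by
  have hder : ∀ u ∈ Ioo (0:ℝ) c, HasDerivWithinAt (fun y : ℝ => y⁻¹) (-(u ^ 2)⁻¹) (Ioo 0 c) u :=
    fun u hu => (hasDerivAt_inv hu.1.ne').hasDerivWithinAt
  have hinj : InjOn (fun y : ℝ => y⁻¹) (Ioo 0 c) := inv_injective.injOn
  rw [← image_inv_pos hc,
    integral_image_eq_integral_abs_deriv_smul measurableSet_Ioo hder hinj]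
  exact setIntegral_congr_fun measurableSet_Ioo fun u hu =>
    key_identity u hu.1.ne' (by linarith [hu.2] : u ≠ 1)

lemma cov_neg {s α : ℝ} :
    (∫ x in Iio (-1 : ℝ), f s α x) = ∫ u in Ioo (-1 : ℝ) 0, g s α u := by
  have hder : ∀ u ∈ Ioo (-1:ℝ) 0,
      HasDerivWithinAt (fun y : ℝ => y⁻¹) (-(u ^ 2)⁻¹) (Ioo (-1:ℝ) 0) u :=
    fun u hu => (hasDerivAt_inv hu.2.ne).hasDerivWithinAt
  have hinj : InjOn (fun y : ℝ => y⁻¹) (Ioo (-1:ℝ) 0) := inv_injective.injOn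
  rw [← image_inv_neg,
    integral_image_eq_integral_abs_deriv_smul measurableSet_Ioo hder hinj]
  exact setIntegral_congr_fun measurableSet_Ioo fun u hu =>
    key_identity u hu.2.ne (by linarith [hu.2] : u ≠ 1)

lemma cov_pos_int {s α : ℝ} {c : ℝ} (hc : 0 < c) (hc1 : c < 1)
    (h : IntegrableOn (g s α) (Ioo 0 c)) : IntegrableOn (f s α) (Ioi c⁻¹) := by
  have hder : ∀ u ∈ Ioo (0:ℝ) c, HasDerivWithinAt (fun y : ℝ => y⁻¹) (-(u ^ 2)⁻¹) (Ioo 0 c) u :=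
    fun u hu => (hasDerivAt_inv hu.1.ne').hasDerivWithinAt
  have hinj : InjOn (fun y : ℝ => y⁻¹) (Ioo 0 c) := inv_injective.injOn
  rw [← image_inv_pos hc,
    integrableOn_image_iff_integrableOn_abs_deriv_smul measurableSet_Ioo hder hinj]
  exact h.congr_fun (fun u hu =>
    (key_identity u hu.1.ne' (by linarith [hu.2] : u ≠ 1)).symm) measurableSet_Ioo

lemma cov_neg_int {s α : ℝ}
    (h : IntegrableOn (g s α) (Ioo (-1:ℝ) 0)) : IntegrableOn (f s α) (Iio (-1:ℝ)) := by
  have hder : ∀ u ∈ Ioo (-1:ℝ) 0,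
      HasDerivWithinAt (fun y : ℝ => y⁻¹) (-(u ^ 2)⁻¹) (Ioo (-1:ℝ) 0) u :=
    fun u hu => (hasDerivAt_inv hu.2.ne).hasDerivWithinAt
  have hinj : InjOn (fun y : ℝ => y⁻¹) (Ioo (-1:ℝ) 0) := inv_injective.injOn
  rw [← image_inv_neg,
    integrableOn_image_iff_integrableOn_abs_deriv_smul measurableSet_Ioo hder hinj]
  exact h.congr_fun (fun u hu =>
    (key_identity u hu.2.ne (by linarith [hu.2] : u ≠ 1)).symm) measurableSet_Ioo

lemma int_g_neg {s α : ℝ} (hs0 : 0 < s) (ha0 : 0 < α) (has : α < s) :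
    IntegrableOn (g s α) (Ioc (-1:ℝ) 0) := by
  apply Measure.integrableOn_of_bounded (M := 1) measure_Ioc_lt_top.ne
    (meas_g hs0 has).aestronglyMeasurable
  refine ae_restrict_of_forall_mem measurableSet_Ioc fun u hu => ?_
  have h1 : |u| ≤ 1 := abs_le.2 ⟨by linarith [hu.1], by linarith [hu.2]⟩
  have ha : 0 ≤ |u| ^ s := Real.rpow_nonneg (abs_nonneg u) _
  have hb : 0 ≤ |u| ^ (s - α) := Real.rpow_nonneg (abs_nonneg u) _
  have ha1 : |u| ^ s ≤ 1 := Real.rpow_le_one (abs_nonneg u) h1 hs0.le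
  have hb1 : |u| ^ (s - α) ≤ 1 := Real.rpow_le_one (abs_nonneg u) h1 (by linarith)
  have hnum : |(|u| ^ s - |u| ^ (s - α))| ≤ 1 := abs_le.2 ⟨by linarith, by linarith⟩
  have hden : 1 ≤ |1 - u| ^ (2 + s) := by
    have h2 : (1:ℝ) ≤ |1 - u| := by
      rw [abs_of_nonneg (by linarith [hu.2] : (0:ℝ) ≤ 1 - u)]; linarith [hu.2]
    calc (1:ℝ) = 1 ^ (2 + s) := (Real.one_rpow _).symm
    _ ≤ |1 - u| ^ (2 + s) := Real.rpow_le_rpow zero_le_one h2 (by linarith)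
  rw [g, Real.norm_eq_abs, abs_div, abs_of_nonneg (by linarith : (0:ℝ) ≤ |1 - u| ^ (2 + s))]
  calc |(|u| ^ s - |u| ^ (s - α))| / (|1 - u| ^ (2 + s)) ≤ 1 / 1 :=
        div_le_div₀ zero_le_one hnum one_pos hden
  _ = 1 := by norm_num

lemma int_g_c {s α : ℝ} (hs0 : 0 < s) (ha0 : 0 < α) (has : α < s) {c : ℝ} (hc1 : c < 1) :
    IntegrableOn (g s α) (Ioo 0 c) := by
  have hdc : (0:ℝ) < (1 - c) ^ (2 + s) := Real.rpow_pos_of_pos (by linarith) _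
  apply Measure.integrableOn_of_bounded (M := 1 / (1 - c) ^ (2 + s)) measure_Ioo_lt_top.ne
    (meas_g hs0 has).aestronglyMeasurable
  refine ae_restrict_of_forall_mem measurableSet_Ioo fun u hu => ?_
  have h1 : |u| ≤ 1 := abs_le.2 ⟨by linarith [hu.1], by linarith [hu.2]⟩
  have ha : 0 ≤ |u| ^ s := Real.rpow_nonneg (abs_nonneg u) _
  have hb : 0 ≤ |u| ^ (s - α) := Real.rpow_nonneg (abs_nonneg u) _
  have ha1 : |u| ^ s ≤ 1 := Real.rpow_le_one (abs_nonneg u) h1 hs0.le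
  have hb1 : |u| ^ (s - α) ≤ 1 := Real.rpow_le_one (abs_nonneg u) h1 (by linarith)
  have hnum : |(|u| ^ s - |u| ^ (s - α))| ≤ 1 := abs_le.2 ⟨by linarith, by linarith⟩
  have hden : (1 - c) ^ (2 + s) ≤ |1 - u| ^ (2 + s) := by
    have h2 : (1 - c : ℝ) ≤ |1 - u| := by
      rw [abs_of_nonneg (by linarith [hu.2] : (0:ℝ) ≤ 1 - u)]; linarith [hu.2]
    exact Real.rpow_le_rpow (by linarith) h2 (by linarith)
  rw [g, Real.norm_eq_abs, abs_div, abs_of_nonneg (le_trans hdc.le hden)]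
  exact div_le_div₀ zero_le_one hnum hdc hden

lemma rpow_self_le {t p : ℝ} (h0 : 0 < t) (h1 : t ≤ 1) (hp1 : p ≤ 1) : t ≤ t ^ p := by
  have := Real.rpow_le_rpow_of_exponent_ge h0 h1 hp1
  rwa [Real.rpow_one] at this

lemma int_rpow_one_sub {s : ℝ} (hs1 : s < 1) :
    IntegrableOn (fun t : ℝ => (1 - t) ^ (-s)) (Ico (1/2 : ℝ) 1) := by
  have himg : (fun u : ℝ => 1 - u) '' Ico (1/2 : ℝ) 1 = Ioc 0 (1/2 : ℝ) := by
    have := Set.image_const_sub_Ico (a := (1:ℝ)) (b := (1/2:ℝ)) (c := 1)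
    norm_num at this
    convert this using 2 <;> norm_num
  have hbase : IntegrableOn (fun x : ℝ => x ^ (-s)) (Ioc 0 (1/2 : ℝ)) := by
    have := intervalIntegral.intervalIntegrable_rpow' (r := -s) (a := 0) (b := 1/2)
      (by linarith : (-1:ℝ) < -s)
    rwa [intervalIntegrable_iff_integrableOn_Ioc_of_le (by norm_num)] at this
  have hder : ∀ u ∈ Ico (1/2:ℝ) 1,
      HasDerivWithinAt (fun y : ℝ => 1 - y) (-1) (Ico (1/2:ℝ) 1) u :=
    fun u _ => by simpa using ((hasDerivAt_id u).const_sub 1).hasDerivWithinAt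
  have hinj : InjOn (fun y : ℝ => 1 - y) (Ico (1/2:ℝ) 1) :=
    fun a _ b _ h => by dsimp at h; linarith
  have h := (integrableOn_image_iff_integrableOn_abs_deriv_smul measurableSet_Ico hder hinj
    (fun x : ℝ => x ^ (-s))).1 (by rw [himg]; exact hbase)
  simpa using h

lemma int_F {s α : ℝ} (hs0 : 0 < s) (hs1 : s < 1) (ha0 : 0 < α) (has : α < s) :
    IntegrableOn (F s α) (Ioo (-1:ℝ) 1) := by
  have h1 : IntegrableOn (F s α) (Icc (-1:ℝ) (1/2)) :=
    (contOn_F hs0 ha0 has (by norm_num)).integrableOn_Icc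
  have h2 : IntegrableOn (F s α) (Ico (1/2:ℝ) 1) := by
    refine Integrable.mono' (int_rpow_one_sub hs1)
      ((meas_F hs0 ha0 has).aestronglyMeasurable.restrict) ?_
    refine ae_restrict_of_forall_mem measurableSet_Ico fun t ht => ?_
    obtain ⟨ht1, ht2⟩ := ht
    have h0t : 0 < t := by linarith
    have h1t : (0:ℝ) < 1 - t := by linarith
    have habs : |t| = t := abs_of_pos h0t
    have habs1 : |1 - t| = 1 - t := abs_of_pos h1t
    have hta : t ≤ t ^ α := rpow_self_le h0t ht2.le (by linarith)
    have htb : t ≤ t ^ (s - α) := rpow_self_le h0t ht2.le (by linarith)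
    have hta1 : t ^ α ≤ 1 := Real.rpow_le_one h0t.le ht2.le ha0.le
    have htb1 : t ^ (s - α) ≤ 1 := Real.rpow_le_one h0t.le ht2.le (by linarith)
    have hden : (0:ℝ) < (1 - t) ^ (2 + s) := Real.rpow_pos_of_pos h1t _
    have hnum0 : 0 ≤ (1 - t ^ α) * (1 - t ^ (s - α)) :=
      mul_nonneg (by linarith) (by linarith)
    have hF0 : 0 ≤ F s α t := by
      rw [F, habs, habs1]; exact div_nonneg hnum0 hden.le
    have hnumle : (1 - t ^ α) * (1 - t ^ (s - α)) ≤ (1 - t) ^ (2:ℕ) := by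
      have : ((1:ℝ) - t) ^ (2:ℕ) = (1 - t) * (1 - t) := sq (1 - t)
      rw [this]
      exact mul_le_mul (by linarith) (by linarith) (by linarith) (by linarith)
    have hkey : F s α t ≤ (1 - t) ^ (-s) := by
      rw [F, habs, habs1]
      have e : (1 - t) ^ (2 + s) = (1 - t) ^ (2:ℕ) * (1 - t) ^ s := by
        rw [← Real.rpow_natCast (1 - t) 2, ← Real.rpow_add h1t]; norm_num
      have h2t : ((1:ℝ) - t) ^ (2:ℕ) ≠ 0 := pow_ne_zero _ h1t.ne'
      have hst : (0:ℝ) < (1 - t) ^ s := Real.rpow_pos_of_pos h1t _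
      calc (1 - t ^ α) * (1 - t ^ (s - α)) / (1 - t) ^ (2 + s)
          ≤ (1 - t) ^ (2:ℕ) / (1 - t) ^ (2 + s) :=
            div_le_div₀ (by positivity) hnumle hden le_rfl
      _ = (1 - t) ^ (-s) := by
            rw [e, Real.rpow_neg h1t.le]
            field_simp
    rw [Real.norm_eq_abs, abs_of_nonneg hF0]
    exact hkey
  refine ((h1.union h2).mono_set ?_)
  intro t ht
  rcases lt_or_ge t (1/2 : ℝ) with h | h
  · exact Or.inl ⟨ht.1.le, h.le⟩
  · exact Or.inr ⟨h, ht.2⟩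

lemma fg_eq {s α : ℝ} (hs0 : 0 < s) (ha0 : 0 < α) (has : α < s) (t : ℝ) (ht : t ≠ 1) :
    f s α t + g s α t = F s α t := by
  rw [f, g, F, ← add_div]
  congr 1
  rcases eq_or_ne t 0 with rfl | ht0
  · rw [abs_zero, Real.zero_rpow ha0.ne', Real.zero_rpow hs0.ne',
      Real.zero_rpow (by linarith : s - α ≠ 0)]
    ring
  · have hx : 0 < |t| := abs_pos.2 ht0
    have e3 : |t| ^ s = |t| ^ α * |t| ^ (s - α) := by rw [← Real.rpow_add hx]; ring_nf
    rw [e3]; ring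

lemma decomp {s α : ℝ} (hs0 : 0 < s) (hs1 : s < 1) (ha0 : 0 < α) (has : α < s)
    {ε : ℝ} (hε0 : 0 < ε) (hε1 : ε < 1) :
    (∫ t in (Ioo (1 - ε) (1 + ε))ᶜ, f s α t)
      = (∫ t in Ioo (-1:ℝ) (1 - ε), F s α t)
        + ∫ u in Ico (1 - ε) (1 + ε)⁻¹, g s α u := by
  have h1e : (0:ℝ) < 1 + ε := by linarith
  have hc0 : (0:ℝ) < (1 + ε)⁻¹ := inv_pos.2 h1e
  have hc1 : (1 + ε)⁻¹ < 1 := inv_lt_one_of_one_lt₀ (by linarith)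
  have hcinv : ((1 + ε)⁻¹)⁻¹ = 1 + ε := inv_inv _
  have hcc : 1 - ε < (1 + ε)⁻¹ := by
    have h : 1 - ε < 1 / (1 + ε) := (lt_div_iff₀ h1e).2 (by nlinarith)
    rwa [one_div] at h
  -- integrabilities
  have hg_neg : IntegrableOn (g s α) (Ioc (-1:ℝ) 0) := int_g_neg hs0 ha0 has
  have hg_c : IntegrableOn (g s α) (Ioo 0 ((1 + ε)⁻¹)) := int_g_c hs0 ha0 has hc1
  have hf_Iio : IntegrableOn (f s α) (Iio (-1:ℝ)) :=
    cov_neg_int (hg_neg.mono_set Ioo_subset_Ioc_self)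
  have hf_Ioi : IntegrableOn (f s α) (Ioi (1 + ε)) := by
    have := cov_pos_int hc0 hc1 hg_c
    rwa [hcinv] at this
  have hf_Icc : IntegrableOn (f s α) (Icc (-1:ℝ) (1 - ε)) := by
    refine (contOn_f hs0 ha0 ?_).integrableOn_Icc
    intro h
    have := h.2
    linarith
  have hf_Iic : IntegrableOn (f s α) (Iic (1 - ε)) := by
    rw [← Iio_union_Icc_eq_Iic (by linarith : (-1:ℝ) ≤ 1 - ε)]
    exact hf_Iio.union hf_Icc
  have hf_Ici : IntegrableOn (f s α) (Ici (1 + ε)) :=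
    (integrableOn_Ici_iff_integrableOn_Ioi enorm_ne_top).2 hf_Ioi
  have hcompl : (Ioo (1 - ε) (1 + ε))ᶜ = Iic (1 - ε) ∪ Ici (1 + ε) := by
    rw [← Set.Ioi_inter_Iio, Set.compl_inter, compl_Ioi, compl_Iio]
  have hdisj : Disjoint (Iic (1 - ε)) (Ici (1 + ε)) := by
    rw [Set.disjoint_left]
    intro x hx hx'
    simp only [mem_Iic, mem_Ici] at hx hx'
    linarith
  have hsplit1 : (∫ t in (Ioo (1 - ε) (1 + ε))ᶜ, f s α t)
      = (∫ t in Iic (1 - ε), f s α t) + ∫ t in Ici (1 + ε), f s α t := by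
    rw [hcompl]
    exact setIntegral_union hdisj measurableSet_Ici hf_Iic hf_Ici
  have hdisj2 : Disjoint (Iio (-1:ℝ)) (Icc (-1:ℝ) (1 - ε)) := by
    rw [Set.disjoint_left]
    intro x hx hx'
    simp only [mem_Iio] at hx
    linarith [hx'.1]
  have h2 : (∫ t in Iic (1 - ε), f s α t)
      = (∫ t in Iio (-1:ℝ), f s α t) + ∫ t in Icc (-1:ℝ) (1 - ε), f s α t := by
    rw [← Iio_union_Icc_eq_Iic (by linarith : (-1:ℝ) ≤ 1 - ε)]
    exact setIntegral_union hdisj2 measurableSet_Icc hf_Iio hf_Icc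
  have h3 : (∫ t in Ici (1 + ε), f s α t) = ∫ u in Ioo 0 ((1 + ε)⁻¹), g s α u := by
    rw [integral_Ici_eq_integral_Ioi]
    conv_lhs => rw [← hcinv]
    exact cov_pos hc0 hc1
  have hg_left : IntegrableOn (g s α) (Ioo 0 (1 - ε)) :=
    hg_c.mono_set (Ioo_subset_Ioo_right hcc.le)
  have hg_right : IntegrableOn (g s α) (Ico (1 - ε) ((1 + ε)⁻¹)) :=
    hg_c.mono_set (fun x hx => ⟨by linarith [hx.1], hx.2⟩)
  have h4 : (∫ u in Ioo 0 ((1 + ε)⁻¹), g s α u)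
      = (∫ u in Ioo 0 (1 - ε), g s α u) + ∫ u in Ico (1 - ε) ((1 + ε)⁻¹), g s α u := by
    rw [← Set.Ioo_union_Ico_eq_Ioo (by linarith : (0:ℝ) < 1 - ε) hcc.le]
    refine setIntegral_union ?_ measurableSet_Ico hg_left hg_right
    rw [Set.disjoint_left]
    intro x hx hx'
    linarith [hx.2, hx'.1]
  have h5 : (∫ t in Iio (-1:ℝ), f s α t) = ∫ u in Ioo (-1:ℝ) 0, g s α u := cov_neg
  have h6 : (∫ t in Icc (-1:ℝ) (1 - ε), f s α t) = ∫ t in Ioo (-1:ℝ) (1 - ε), f s α t :=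
    integral_Icc_eq_integral_Ioo
  have h7 : (∫ u in Ioo (-1:ℝ) 0, g s α u) + (∫ u in Ioo 0 (1 - ε), g s α u)
      = ∫ u in Ioo (-1:ℝ) (1 - ε), g s α u := by
    have e1 : (∫ u in Ioo (-1:ℝ) 0, g s α u) = ∫ u in Ioc (-1:ℝ) 0, g s α u :=
      integral_Ioc_eq_integral_Ioo.symm
    rw [e1, ← Set.Ioc_union_Ioo_eq_Ioo (by norm_num : (-1:ℝ) ≤ 0)
      (by linarith : (0:ℝ) < 1 - ε)]
    refine (setIntegral_union ?_ measurableSet_Ioo hg_neg hg_left).symm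
    rw [Set.disjoint_left]
    intro x hx hx'
    linarith [hx.2, hx'.1]
  have hgset : IntegrableOn (g s α) (Ioo (-1:ℝ) (1 - ε)) := by
    rw [← Set.Ioc_union_Ioo_eq_Ioo (by norm_num : (-1:ℝ) ≤ 0) (by linarith : (0:ℝ) < 1 - ε)]
    exact hg_neg.union hg_left
  have hfset : IntegrableOn (f s α) (Ioo (-1:ℝ) (1 - ε)) :=
    hf_Icc.mono_set Ioo_subset_Icc_self
  have h8 : (∫ t in Ioo (-1:ℝ) (1 - ε), f s α t) + (∫ u in Ioo (-1:ℝ) (1 - ε), g s α u)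
      = ∫ t in Ioo (-1:ℝ) (1 - ε), F s α t := by
    rw [← integral_add hfset hgset]
    exact setIntegral_congr_fun measurableSet_Ioo fun t ht =>
      fg_eq hs0 ha0 has t (by linarith [ht.2] : t ≠ 1)
  rw [hsplit1, h2, h3, h4, h5, h6]
  linarith [h7, h8]

lemma g_pointwise_bound {s α : ℝ} (hs0 : 0 < s) (hs1 : s < 1) (ha0 : 0 < α) (has : α < s)
    {ε u : ℝ} (hε0 : 0 < ε) (hε1 : ε < 1) (hu : u ∈ Ico (1 - ε) ((1 + ε)⁻¹)) :
    ‖g s α u‖ ≤ ((1 + ε) / ε) ^ (1 + s) := by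
  have h1e : (0:ℝ) < 1 + ε := by linarith
  have hc1 : (1 + ε)⁻¹ < 1 := inv_lt_one_of_one_lt₀ (by linarith)
  have hu0 : 0 < u := lt_of_lt_of_le (by linarith) hu.1
  have hu1 : u < 1 := lt_trans hu.2 hc1
  have h1u : (0:ℝ) < 1 - u := by linarith
  have habs : |u| = u := abs_of_pos hu0
  have habs1 : |1 - u| = 1 - u := abs_of_pos h1u
  have hul : ε / (1 + ε) ≤ 1 - u := by
    have h : 1 - (1 + ε)⁻¹ = ε / (1 + ε) := by field_simp; ring
    linarith [hu.2, h.ge, h.le]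
  have hsa1 : u ^ (s - α) ≤ 1 := Real.rpow_le_one hu0.le hu1.le (by linarith)
  have hua : u ≤ u ^ α := rpow_self_le hu0 hu1.le (by linarith)
  have hua1 : u ^ α ≤ 1 := Real.rpow_le_one hu0.le hu1.le ha0.le
  have hord : u ^ s ≤ u ^ (s - α) :=
    Real.rpow_le_rpow_of_exponent_ge hu0 hu1.le (by linarith)
  have hnum : |(u ^ s - u ^ (s - α))| ≤ 1 - u := by
    rw [abs_sub_comm, abs_of_nonneg (by linarith)]
    have e : u ^ (s - α) - u ^ s = u ^ (s - α) * (1 - u ^ α) := by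
      have : u ^ (s - α) * u ^ α = u ^ s := by
        rw [← Real.rpow_add hu0]; ring_nf
      rw [mul_sub, this, mul_one]
    rw [e]
    calc u ^ (s - α) * (1 - u ^ α) ≤ 1 * (1 - u) := by
          apply mul_le_mul hsa1 (by linarith) (by linarith) zero_le_one
    _ = 1 - u := one_mul _
  have hden : (0:ℝ) < (1 - u) ^ (2 + s) := Real.rpow_pos_of_pos h1u _
  have e2 : (1 - u) ^ (2 + s) = (1 - u) * (1 - u) ^ (1 + s) := by
    have h := Real.rpow_add h1u 1 (1 + s)
    rw [Real.rpow_one] at h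
    rw [show (2:ℝ) + s = 1 + (1 + s) by ring, h]
  have hstep1 : ‖g s α u‖ ≤ ((1 - u) ^ (1 + s))⁻¹ := by
    rw [g, Real.norm_eq_abs, abs_div, habs, habs1, abs_of_nonneg hden.le]
    have h1s : (0:ℝ) < (1 - u) ^ (1 + s) := Real.rpow_pos_of_pos h1u _
    calc |(u ^ s - u ^ (s - α))| / (1 - u) ^ (2 + s)
        ≤ (1 - u) / (1 - u) ^ (2 + s) := div_le_div₀ h1u.le hnum hden le_rfl
    _ = ((1 - u) ^ (1 + s))⁻¹ := by
        rw [e2]; field_simp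
  have hstep2 : ((1 - u) ^ (1 + s))⁻¹ ≤ ((ε / (1 + ε)) ^ (1 + s))⁻¹ := by
    have hlo : (0:ℝ) < (ε / (1 + ε)) ^ (1 + s) :=
      Real.rpow_pos_of_pos (div_pos hε0 h1e) _
    exact inv_anti₀ hlo (Real.rpow_le_rpow (by positivity) hul (by linarith))
  have hstep3 : ((ε / (1 + ε)) ^ (1 + s))⁻¹ = ((1 + ε) / ε) ^ (1 + s) := by
    rw [← Real.inv_rpow (by positivity), inv_div]
  calc ‖g s α u‖ ≤ ((1 - u) ^ (1 + s))⁻¹ := hstep1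
  _ ≤ ((ε / (1 + ε)) ^ (1 + s))⁻¹ := hstep2
  _ = ((1 + ε) / ε) ^ (1 + s) := hstep3

lemma F_nonneg {s α : ℝ} (hs0 : 0 < s) (ha0 : 0 < α) (has : α < s) {t : ℝ}
    (ht : t ∈ Ioo (-1:ℝ) 1) : 0 ≤ F s α t := by
  have h1 : |t| ≤ 1 := abs_le.2 ⟨ht.1.le, ht.2.le⟩
  have ha1 : |t| ^ α ≤ 1 := Real.rpow_le_one (abs_nonneg t) h1 ha0.le
  have hb1 : |t| ^ (s - α) ≤ 1 := Real.rpow_le_one (abs_nonneg t) h1 (by linarith)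
  exact div_nonneg (mul_nonneg (by linarith) (by linarith))
    (Real.rpow_nonneg (abs_nonneg _) _)

lemma L_pos {s α : ℝ} (hs0 : 0 < s) (hs1 : s < 1) (ha0 : 0 < α) (has : α < s) :
    0 < ∫ t in Ioo (-1:ℝ) 1, F s α t := by
  set c₀ := (1 - (1/2:ℝ) ^ α) * (1 - (1/2:ℝ) ^ (s - α)) with hc₀def
  have hhalf1 : ((1:ℝ)/2) ^ α < 1 := Real.rpow_lt_one (by norm_num) (by norm_num) ha0
  have hhalf1' : (0:ℝ) ≤ (1/2:ℝ) ^ α := Real.rpow_nonneg (by norm_num) _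
  have hhalf2 : ((1:ℝ)/2) ^ (s - α) < 1 :=
    Real.rpow_lt_one (by norm_num) (by norm_num) (by linarith)
  have hhalf2' : (0:ℝ) ≤ (1/2:ℝ) ^ (s - α) := Real.rpow_nonneg (by norm_num) _
  have hc₀ : 0 < c₀ := mul_pos (by linarith) (by linarith)
  have hsub : Ioo (0:ℝ) (1/2) ⊆ Ioo (-1:ℝ) 1 :=
    fun x hx => ⟨by linarith [hx.1], by linarith [hx.2]⟩
  have hlb : ∀ t ∈ Ioo (0:ℝ) (1/2), c₀ ≤ F s α t := by
    intro t ht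
    have h0t : 0 < t := ht.1
    have habs : |t| = t := abs_of_pos h0t
    have hta : t ^ α ≤ (1/2:ℝ) ^ α := Real.rpow_le_rpow h0t.le ht.2.le ha0.le
    have htb : t ^ (s - α) ≤ (1/2:ℝ) ^ (s - α) :=
      Real.rpow_le_rpow h0t.le ht.2.le (by linarith)
    have hta0 : 0 ≤ t ^ α := Real.rpow_nonneg h0t.le _
    have htb0 : 0 ≤ t ^ (s - α) := Real.rpow_nonneg h0t.le _
    have habs1 : |1 - t| = 1 - t := abs_of_pos (by linarith [ht.2])
    have hden1 : (1 - t) ^ (2 + s) ≤ 1 :=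
      Real.rpow_le_one (by linarith [ht.2]) (by linarith) (by linarith)
    have hdenpos : 0 < (1 - t) ^ (2 + s) := Real.rpow_pos_of_pos (by linarith [ht.2]) _
    have hnum : c₀ ≤ (1 - t ^ α) * (1 - t ^ (s - α)) := by
      apply mul_le_mul (by linarith) (by linarith) (by linarith) (by linarith)
    rw [F, habs, habs1]
    calc c₀ ≤ (1 - t ^ α) * (1 - t ^ (s - α)) := hnum
    _ ≤ (1 - t ^ α) * (1 - t ^ (s - α)) / (1 - t) ^ (2 + s) := by
        rw [le_div_iff₀ hdenpos]
        have ha0' : 0 ≤ (1 - t ^ α) * (1 - t ^ (s - α)) := le_trans hc₀.le hnum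
        exact mul_le_of_le_one_right ha0' hden1
  have hIon : IntegrableOn (F s α) (Ioo (0:ℝ) (1/2)) := (int_F hs0 hs1 ha0 has).mono_set hsub
  have hge := setIntegral_ge_of_const_le measurableSet_Ioo (measure_Ioo_lt_top).ne hlb hIon
  have hvol : (volume (Ioo (0:ℝ) (1/2))).toReal = 1/2 := by
    rw [Real.volume_Ioo]
    norm_num
  have hmono : (∫ t in Ioo (0:ℝ) (1/2), F s α t) ≤ ∫ t in Ioo (-1:ℝ) 1, F s α t := by
    refine setIntegral_mono_set (int_F hs0 hs1 ha0 has) ?_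
      (HasSubset.Subset.eventuallyLE hsub)
    exact ae_restrict_of_forall_mem measurableSet_Ioo fun t ht => F_nonneg hs0 ha0 has ht
  rw [measureReal_def, hvol, smul_eq_mul] at hge
  have : 0 < c₀ * (1/2) := by positivity
  linarith

end PV

open PV in
theorem pv_integral_pos (s α : ℝ) (hs : s ∈ Set.Ioo (0:ℝ) 1)
    (hα : α ∈ Set.Ioo (0:ℝ) s) :
    ∃ L : ℝ, 0 < L ∧
      Tendsto (fun ε : ℝ =>
          ∫ t in (Set.Ioo (1 - ε) (1 + ε))ᶜ, (1 - |t| ^ α) / |1 - t| ^ (2 + s))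
        (nhdsWithin 0 (Set.Ioi 0)) (nhds L) := by
  obtain ⟨hs0, hs1⟩ := hs
  obtain ⟨ha0, has⟩ := hα
  set L : ℝ := ∫ t in Ioo (-1:ℝ) 1, F s α t with hLdef
  have hintF := int_F hs0 hs1 ha0 has
  refine ⟨L, L_pos hs0 hs1 ha0 has, ?_⟩
  have hev : Ioo (0:ℝ) 1 ∈ 𝓝[>] (0:ℝ) :=
    Ioo_mem_nhdsGT_of_mem (by norm_num : (0:ℝ) ∈ Ico (0:ℝ) 1)
  have hidto : Tendsto (fun ε : ℝ => ε) (𝓝[>] (0:ℝ)) (𝓝 0) :=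
    tendsto_id.mono_left nhdsWithin_le_nhds
  -- B tendsto
  have hmeas_t : Tendsto (fun ε : ℝ => (volume.restrict (Ioo (-1:ℝ) 1)) (Ico (1 - ε) 1))
      (𝓝[>] (0:ℝ)) (𝓝 0) := by
    have hle : ∀ ε : ℝ, (volume.restrict (Ioo (-1:ℝ) 1)) (Ico (1 - ε) 1)
        ≤ ENNReal.ofReal ε := by
      intro ε
      rw [Measure.restrict_apply measurableSet_Ico]
      refine le_trans (measure_mono inter_subset_left) ?_
      rw [Real.volume_Ico]
      exact ENNReal.ofReal_le_ofReal (by linarith)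
    have hof : Tendsto (fun ε : ℝ => ENNReal.ofReal ε) (𝓝[>] (0:ℝ)) (𝓝 0) := by
      have := ENNReal.tendsto_ofReal hidto
      rwa [ENNReal.ofReal_zero] at this
    exact tendsto_of_tendsto_of_tendsto_of_le_of_le tendsto_const_nhds hof
      (fun ε => zero_le) hle
  have hB : Tendsto (fun ε : ℝ => ∫ t in Ico (1 - ε) 1, F s α t) (𝓝[>] (0:ℝ)) (𝓝 0) := by
    have h := hintF.tendsto_setIntegral_nhds_zero hmeas_t
    refine h.congr' ?_
    filter_upwards [hev] with ε hε
    have hss : Ico (1 - ε) 1 ⊆ Ioo (-1:ℝ) 1 :=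
      fun x hx => ⟨by linarith [hx.1, hε.2], hx.2⟩
    rw [Measure.restrict_restrict measurableSet_Ico, inter_eq_left.2 hss]
  -- A tendsto
  have hA : Tendsto (fun ε : ℝ => ∫ t in Ioo (-1:ℝ) (1 - ε), F s α t) (𝓝[>] (0:ℝ)) (𝓝 L) := by
    have h := (tendsto_const_nhds (x := L) (f := 𝓝[>] (0:ℝ))).sub hB
    rw [sub_zero] at h
    refine h.congr' ?_
    filter_upwards [hev] with ε hε
    have hss : Ico (1 - ε) 1 ⊆ Ioo (-1:ℝ) 1 :=
      fun x hx => ⟨by linarith [hx.1, hε.2], hx.2⟩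
    have hdisj : Disjoint (Ioo (-1:ℝ) (1 - ε)) (Ico (1 - ε) 1) := by
      rw [Set.disjoint_left]
      intro x hx hx'
      exact absurd hx'.1 (not_le.2 hx.2)
    have hsplit : L = (∫ t in Ioo (-1:ℝ) (1 - ε), F s α t) + ∫ t in Ico (1 - ε) 1, F s α t := by
      rw [hLdef, ← Set.Ioo_union_Ico_eq_Ioo (by linarith [hε.2] : (-1:ℝ) < 1 - ε)
        (by linarith [hε.1] : 1 - ε ≤ 1)]
      exact setIntegral_union hdisj measurableSet_Ico
        (hintF.mono_set (Ioo_subset_Ioo_right (by linarith [hε.1])))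
        (hintF.mono_set hss)
    linarith
  -- R bound
  have hRbound : ∀ ε ∈ Ioo (0:ℝ) 1,
      ‖∫ u in Ico (1 - ε) ((1 + ε)⁻¹), g s α u‖ ≤ 2 ^ (1 + s) * ε ^ (1 - s) := by
    intro ε hε
    obtain ⟨hε0, hε1⟩ := hε
    have h1e : (0:ℝ) < 1 + ε := by linarith
    have hccle : (0:ℝ) ≤ (1 + ε)⁻¹ - (1 - ε) := by
      have h : 1 - ε ≤ 1 / (1 + ε) := (le_div_iff₀ h1e).2 (by nlinarith)
      rw [one_div] at h
      linarith
    have hnorm := norm_setIntegral_le_of_norm_le_const_ae' (μ := volume)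
      (s := Ico (1 - ε) ((1 + ε)⁻¹)) measure_Ico_lt_top
      (Filter.Eventually.of_forall fun u hu =>
        g_pointwise_bound hs0 hs1 ha0 has hε0 hε1 hu)
    refine le_trans hnorm ?_
    rw [measureReal_def, Real.volume_Ico, ENNReal.toReal_ofReal hccle]
    have hq : (1 + ε)⁻¹ - (1 - ε) ≤ ε ^ (2:ℕ) := by
      have heq : (1 + ε)⁻¹ - (1 - ε) = ε ^ (2:ℕ) / (1 + ε) := by
        field_simp
        ring
      rw [heq]
      exact div_le_self (by positivity) (by linarith)
    have hp : ((1 + ε) / ε) ^ (1 + s) ≤ (2 / ε) ^ (1 + s) :=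
      Real.rpow_le_rpow (by positivity)
        ((div_le_div_iff_of_pos_right hε0).2 (by linarith)) (by linarith)
    calc ((1 + ε) / ε) ^ (1 + s) * ((1 + ε)⁻¹ - (1 - ε))
        ≤ (2 / ε) ^ (1 + s) * ε ^ (2:ℕ) :=
          mul_le_mul hp hq hccle (by positivity)
    _ = 2 ^ (1 + s) * ε ^ (1 - s) := by
        rw [Real.div_rpow (by norm_num) hε0.le,
          show (ε:ℝ) ^ (2:ℕ) = ε ^ ((2:ℕ):ℝ) from (Real.rpow_natCast ε 2).symm,
          div_mul_eq_mul_div, mul_div_assoc, ← Real.rpow_sub hε0]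
        norm_num
        left
        congr 1
        ring
  have hpow_t : Tendsto (fun ε : ℝ => 2 ^ (1 + s) * ε ^ (1 - s)) (𝓝[>] (0:ℝ)) (𝓝 0) := by
    have hc : ContinuousAt (fun x : ℝ => x ^ (1 - s)) 0 :=
      Real.continuousAt_rpow_const 0 (1 - s) (Or.inr (by linarith))
    have h0 : (0:ℝ) ^ (1 - s) = 0 := Real.zero_rpow (by linarith : (1:ℝ) - s ≠ 0)
    have := (hc.tendsto.mono_left
      (nhdsWithin_le_nhds (s := Set.Ioi (0:ℝ)))).const_mul ((2:ℝ) ^ (1 + s))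
    rwa [h0, mul_zero] at this
  have hR : Tendsto (fun ε : ℝ => ∫ u in Ico (1 - ε) ((1 + ε)⁻¹), g s α u)
      (𝓝[>] (0:ℝ)) (𝓝 0) := by
    refine squeeze_zero_norm' ?_ hpow_t
    filter_upwards [hev] with ε hε using hRbound ε hε
  have hsum := hA.add hR
  rw [add_zero] at hsum
  refine hsum.congr' ?_
  filter_upwards [hev] with ε hε
  exact (decomp hs0 hs1 ha0 has hε.1 hε.2).symm
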